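/- Let ℓ ≥ 3 be an integer and n an integer with n ≥ 0. The number of functions η : Fin N → ℤ such that (η, n) ∈ U^(1) and ℓ·n − Σ_{i ∈ Fin N} η(i) ≤ ℓ − 2 equals Σ_{k=2}^{ℓ−1} C(n − (2k+1) + 2ℓ, 2ℓ), where the binomial coefficient C(n − (2k+1) + 2ℓ, 2ℓ) is interpreted as 0 when n − (2k+1) < 0. (This computes the Hilbert function of the cokernel of the map R → ω_R(3), 1 ↦ T^{η_1}, which is the direct sum of the free rank-one modules C_2, …, C_{ℓ−1}; in particular that cokernel is an Ulrich module of multiplicity ℓ−2, whence the Ehrhart ring is almost Gorenstein.) -/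

import Mathlib

/-- `(μ, d)` belongs to `U^(n)` for the cycle of length `2ℓ+1`. -/
def inU (ℓ : ℕ) (n : ℤ) (μ : Fin (2 * ℓ + 1) → ℤ) (d : ℤ) : Prop :=
  (∀ i, n ≤ μ i) ∧
  (∀ i : Fin (2 * ℓ + 1), μ i + μ (i + 1) ≤ d - n) ∧
  (∑ i, μ i ≤ (ℓ : ℤ) * d - n)

open Fin.NatCast Fin.CommRing

section Aux

variable (ℓ : ℕ)

/-- The reconstruction map: `η i = k + ∑ odd shifts of g`. -/
def gRec (k : ℤ) (g : Fin (2 * ℓ + 1) → ℤ) (i : Fin (2 * ℓ + 1)) : ℤ :=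
  k + ∑ j ∈ Finset.range ℓ, g (i + ((2 * j + 1 : ℕ) : Fin (2 * ℓ + 1)))

lemma sum_shift (g : Fin (2 * ℓ + 1) → ℤ) (c : Fin (2 * ℓ + 1)) :
    ∑ x, g (x + c) = ∑ x, g x :=
  Fintype.sum_equiv (Equiv.addRight c) _ _ fun _ => rfl

lemma sum_range_shift (g : Fin (2 * ℓ + 1) → ℤ) (i : Fin (2 * ℓ + 1)) :
    ∑ r ∈ Finset.range (2 * ℓ + 1), g (i + (r : Fin (2 * ℓ + 1))) = ∑ x, g x := by
  rw [← Fin.sum_univ_eq_sum_range (fun r => g (i + (r : Fin (2 * ℓ + 1)))) (2 * ℓ + 1)]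
  simp_rw [Fin.cast_val_eq_self]
  exact Fintype.sum_equiv (Equiv.addLeft i) _ _ fun _ => rfl

lemma sum_pairs (q : ℕ) (h : ℕ → ℤ) :
    ∑ r ∈ Finset.range (2 * q), h r = ∑ j ∈ Finset.range q, (h (2 * j) + h (2 * j + 1)) := by
  induction q with
  | zero => simp
  | succ q ih =>
      rw [Finset.sum_range_succ, ← ih, show 2 * (q + 1) = (2 * q + 1) + 1 by ring,
        Finset.sum_range_succ, Finset.sum_range_succ]
      ring

lemma odd_pair_sum (g : Fin (2 * ℓ + 1) → ℤ) (i : Fin (2 * ℓ + 1)) :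
    (∑ j ∈ Finset.range ℓ, g (i + ((2 * j + 1 : ℕ) : Fin (2 * ℓ + 1)))) +
      ∑ j ∈ Finset.range ℓ, g (i + ((2 * j + 2 : ℕ) : Fin (2 * ℓ + 1))) = (∑ x, g x) - g i := by
  rw [← Finset.sum_add_distrib,
    ← sum_pairs ℓ (fun r => g (i + ((r + 1 : ℕ) : Fin (2 * ℓ + 1))))]
  have h2 := Finset.sum_range_succ' (fun r => g (i + (r : Fin (2 * ℓ + 1)))) (2 * ℓ)
  rw [sum_range_shift] at h2
  simp only [Nat.cast_zero, add_zero] at h2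
  linarith

lemma gRec_pair (k : ℤ) (g : Fin (2 * ℓ + 1) → ℤ) (i : Fin (2 * ℓ + 1)) :
    gRec ℓ k g i + gRec ℓ k g (i + 1) = 2 * k + ((∑ x, g x) - g i) := by
  have hcast : ∀ j : ℕ, (i + 1) + ((2 * j + 1 : ℕ) : Fin (2 * ℓ + 1))
      = i + ((2 * j + 2 : ℕ) : Fin (2 * ℓ + 1)) := by
    intro j
    push_cast
    ring
  unfold gRec
  simp_rw [hcast]
  rw [add_add_add_comm, odd_pair_sum]
  ring

lemma gRec_sum (k : ℤ) (g : Fin (2 * ℓ + 1) → ℤ) :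
    ∑ i, gRec ℓ k g i = (2 * ℓ + 1 : ℤ) * k + (ℓ : ℤ) * ∑ x, g x := by
  unfold gRec
  rw [Finset.sum_add_distrib, Finset.sum_const, Finset.sum_comm]
  have h1 : ∀ j ∈ Finset.range ℓ, (∑ i, g (i + ((2 * j + 1 : ℕ) : Fin (2 * ℓ + 1)))) = ∑ x, g x :=
    fun j _ => sum_shift ℓ g _
  rw [Finset.sum_congr rfl h1, Finset.sum_const, Finset.card_range, Finset.card_univ,
    Fintype.card_fin, nsmul_eq_mul, nsmul_eq_mul]
  push_cast
  ring

lemma gRec_slack (n : ℕ) (η : Fin (2 * ℓ + 1) → ℤ) :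
    gRec ℓ ((∑ x, η x) - (ℓ : ℤ) * n + ℓ) (fun x => (n : ℤ) - 1 - η x - η (x + 1)) = η := by
  funext i
  have hcast : ∀ j : ℕ, (i + ((2 * j + 1 : ℕ) : Fin (2 * ℓ + 1))) + 1
      = i + ((2 * j + 2 : ℕ) : Fin (2 * ℓ + 1)) := by
    intro j
    push_cast
    ring
  unfold gRec
  simp only []
  simp_rw [hcast]
  rw [show (∑ j ∈ Finset.range ℓ, ((n : ℤ) - 1 - η (i + ((2 * j + 1 : ℕ) : Fin (2 * ℓ + 1)))
      - η (i + ((2 * j + 2 : ℕ) : Fin (2 * ℓ + 1)))))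
      = (ℓ : ℤ) * ((n : ℤ) - 1) - ((∑ j ∈ Finset.range ℓ, η (i + ((2 * j + 1 : ℕ) : Fin (2 * ℓ + 1))))
        + ∑ j ∈ Finset.range ℓ, η (i + ((2 * j + 2 : ℕ) : Fin (2 * ℓ + 1)))) by
    rw [Finset.sum_sub_distrib, Finset.sum_sub_distrib, Finset.sum_const, Finset.card_range,
      nsmul_eq_mul]
    ring]
  rw [odd_pair_sum]
  ring

lemma slack_sum (n : ℕ) (η : Fin (2 * ℓ + 1) → ℤ) :
    ∑ i, ((n : ℤ) - 1 - η i - η (i + 1)) = (2 * ℓ + 1 : ℤ) * ((n : ℤ) - 1) - 2 * ∑ x, η x := by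
  rw [Finset.sum_sub_distrib, Finset.sum_sub_distrib, Finset.sum_const, Finset.card_univ,
    Fintype.card_fin, nsmul_eq_mul]
  have h1 : ∑ i, η (i + 1) = ∑ x, η x := sum_shift ℓ η 1
  push_cast
  linarith

/-- Stars and bars for `piAntidiag`. -/
lemma card_piAntidiag_univ (d m : ℕ) :
    ((Finset.univ : Finset (Fin d)).piAntidiag m).card = Nat.multichoose d m := by
  classical
  rw [← Fintype.card_coe]
  have e : {f : Fin d → ℕ // f ∈ (Finset.univ : Finset (Fin d)).piAntidiag m} ≃ Sym (Fin d) m := by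
    refine (Equiv.subtypeEquivRight (q := fun f => ∑ i, f i = m) ?_).trans
      (Sym.equivNatSumOfFintype (Fin d) m).symm
    intro f
    simp [Finset.mem_piAntidiag]
  rw [Fintype.card_congr e, Sym.card_sym_eq_multichoose, Fintype.card_fin]

end Aux

theorem stmt_15 (ℓ : ℕ) (hℓ : 3 ≤ ℓ) (n : ℕ) :
    {η : Fin (2 * ℓ + 1) → ℤ |
      inU ℓ 1 η (n : ℤ) ∧ (ℓ : ℤ) * (n : ℤ) - ∑ i, η i ≤ (ℓ : ℤ) - 2}.ncard =
      ∑ k ∈ Finset.Icc 2 (ℓ - 1),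
        if 2 * k + 1 ≤ n then Nat.choose (n - (2 * k + 1) + 2 * ℓ) (2 * ℓ) else 0 := by
  classical
  set S : Set (Fin (2 * ℓ + 1) → ℤ) :=
    {η | inU ℓ 1 η (n : ℤ) ∧ (ℓ : ℤ) * (n : ℤ) - ∑ i, η i ≤ (ℓ : ℤ) - 2} with hS
  set Φ : (Fin (2 * ℓ + 1) → ℤ) → ((_ : ℕ) × (Fin (2 * ℓ + 1) → ℕ)) :=
    fun η => ⟨((∑ x, η x) - (ℓ : ℤ) * n + ℓ).toNat,
      fun i => ((n : ℤ) - 1 - η i - η (i + 1)).toNat⟩ with hΦ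
  set F : Finset ((_ : ℕ) × (Fin (2 * ℓ + 1) → ℕ)) :=
    (Finset.Icc 2 (ℓ - 1)).sigma
      (fun k => if 2 * k + 1 ≤ n then Finset.univ.piAntidiag (n - (2 * k + 1)) else ∅) with hF
  -- facts about members of S
  have hmem : ∀ η ∈ S, ∀ i, 0 ≤ (n : ℤ) - 1 - η i - η (i + 1) := by
    rintro η ⟨⟨h1, h2, h3⟩, h4⟩ i
    have := h2 i
    linarith
  have hKpos : ∀ η ∈ S, 2 ≤ (∑ x, η x) - (ℓ : ℤ) * n + ℓ := by
    rintro η ⟨⟨h1, h2, h3⟩, h4⟩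
    linarith
  have hinj : Set.InjOn Φ S := by
    intro η hη η' hη' heq
    simp only [hΦ] at heq
    have hk := congrArg Sigma.fst heq
    have hf := congrArg Sigma.snd heq
    simp only at hk hf
    have hK : (∑ x, η x) - (ℓ : ℤ) * n + ℓ = (∑ x, η' x) - (ℓ : ℤ) * n + ℓ := by
      have n1 := hKpos η hη
      have n2 := hKpos η' hη'
      omega
    have ht : ∀ i, (n : ℤ) - 1 - η i - η (i + 1) = (n : ℤ) - 1 - η' i - η' (i + 1) := by
      intro i
      have e1 := congrFun hf i
      have n1 := hmem η hη i
      have n2 := hmem η' hη' i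
      omega
    calc η = gRec ℓ ((∑ x, η x) - (ℓ : ℤ) * n + ℓ)
            (fun x => (n : ℤ) - 1 - η x - η (x + 1)) := (gRec_slack ℓ n η).symm
      _ = gRec ℓ ((∑ x, η' x) - (ℓ : ℤ) * n + ℓ)
            (fun x => (n : ℤ) - 1 - η' x - η' (x + 1)) := by
          rw [hK, funext ht]
      _ = η' := gRec_slack ℓ n η'
  have himg : Φ '' S = ↑F := by
    ext ⟨k, f⟩
    simp only [Set.mem_image, Finset.mem_coe, hF, Finset.mem_sigma]
    constructor
    · rintro ⟨η, hη, hΦη⟩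
      obtain ⟨⟨h1, h2, h3⟩, h4⟩ := hη
      have hK2 : 2 ≤ (∑ x, η x) - (ℓ : ℤ) * n + ℓ := by linarith
      have hKl : (∑ x, η x) - (ℓ : ℤ) * n + ℓ ≤ (ℓ : ℤ) - 1 := by linarith
      simp only [hΦ] at hΦη
      have hfst := congrArg Sigma.fst hΦη
      have hsnd := congrArg Sigma.snd hΦη
      simp only at hfst hsnd
      have hkval : (k : ℤ) = (∑ x, η x) - (ℓ : ℤ) * n + ℓ := by
        rw [← hfst, Int.toNat_of_nonneg (by linarith)]
      have hfval : ∀ i, (f i : ℤ) = (n : ℤ) - 1 - η i - η (i + 1) := by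
        intro i
        rw [← congrFun hsnd i, Int.toNat_of_nonneg (hmem η ⟨⟨h1, h2, h3⟩, h4⟩ i)]
      have hsumf : (∑ i, (f i : ℤ)) = (n : ℤ) - 1 - 2 * ((k : ℤ)) := by
        rw [Finset.sum_congr rfl (fun i _ => hfval i), slack_sum ℓ n η, hkval]
        ring
      have hfnonneg : (0 : ℤ) ≤ ∑ i, (f i : ℤ) :=
        Finset.sum_nonneg fun i _ => Int.natCast_nonneg _
      have hn : 2 * k + 1 ≤ n := by omega
      refine ⟨?_, ?_⟩
      · rw [Finset.mem_Icc]
        constructor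
        · omega
        · omega
      · rw [if_pos hn, Finset.mem_piAntidiag]
        refine ⟨?_, fun i _ => Finset.mem_univ i⟩
        have : ((∑ i, f i : ℕ) : ℤ) = ((n - (2 * k + 1) : ℕ) : ℤ) := by
          push_cast [hn]
          rw [hsumf]
          ring
        exact_mod_cast this
    · rintro ⟨hk, hf⟩
      rw [Finset.mem_Icc] at hk
      by_cases hn : 2 * k + 1 ≤ n
      · rw [if_pos hn, Finset.mem_piAntidiag] at hf
        obtain ⟨hfsum, -⟩ := hf
        set g : Fin (2 * ℓ + 1) → ℤ := fun x => (f x : ℤ) with hg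
        have hgsum : ∑ x, g x = (n : ℤ) - 2 * k - 1 := by
          have : ((∑ i, f i : ℕ) : ℤ) = ((n - (2 * k + 1) : ℕ) : ℤ) := by exact_mod_cast hfsum
          push_cast [hn] at this
          rw [hg]
          simp only []
          omega
        have hgnonneg : ∀ x, 0 ≤ g x := fun x => Int.natCast_nonneg _
        set η : Fin (2 * ℓ + 1) → ℤ := gRec ℓ (k : ℤ) g with hη
        have hpair : ∀ i, η i + η (i + 1) = (n : ℤ) - 1 - g i := by
          intro i
          rw [hη, gRec_pair, hgsum]
          ring
        have hsumη : ∑ i, η i = (ℓ : ℤ) * n + k - ℓ := by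
          rw [hη, gRec_sum, hgsum]
          ring
        have hkl : (k : ℤ) ≤ (ℓ : ℤ) - 1 := by
          have := hk.2
          omega
        have hk2 : (2 : ℤ) ≤ (k : ℤ) := by exact_mod_cast hk.1
        have hηS : η ∈ S := by
          refine ⟨⟨?_, ?_, ?_⟩, ?_⟩
          · intro i
            rw [hη]
            unfold gRec
            have : (0 : ℤ) ≤ ∑ j ∈ Finset.range ℓ, g (i + ((2 * j + 1 : ℕ) : Fin (2 * ℓ + 1))) :=
              Finset.sum_nonneg fun j _ => hgnonneg _
            linarith
          · intro i
            rw [hpair i]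
            have := hgnonneg i
            linarith
          · rw [hsumη]
            linarith
          · rw [hsumη]
            linarith
        refine ⟨η, hηS, ?_⟩
        have hc1 : ((∑ x, η x) - (ℓ : ℤ) * n + ℓ).toNat = k := by
          rw [hsumη, show (ℓ : ℤ) * n + k - ℓ - (ℓ : ℤ) * n + ℓ = (k : ℤ) by ring, Int.toNat_natCast]
        have hc2 : (fun i => ((n : ℤ) - 1 - η i - η (i + 1)).toNat) = f := by
          funext i
          have : (n : ℤ) - 1 - η i - η (i + 1) = g i := by
            have := hpair i
            linarith
          rw [this, hg, Int.toNat_natCast]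
        simp only [hΦ]
        rw [hc1, hc2]
      · rw [if_neg hn] at hf
        exact absurd hf (Finset.notMem_empty _)
  calc S.ncard = (Φ '' S).ncard := (Set.ncard_image_of_injOn hinj).symm
    _ = F.card := by rw [himg, Set.ncard_coe_finset]
    _ = ∑ k ∈ Finset.Icc 2 (ℓ - 1),
        if 2 * k + 1 ≤ n then Nat.choose (n - (2 * k + 1) + 2 * ℓ) (2 * ℓ) else 0 := by
      rw [hF, Finset.card_sigma]
      refine Finset.sum_congr rfl fun k _ => ?_
      by_cases hn : 2 * k + 1 ≤ n
      · rw [if_pos hn, if_pos hn, card_piAntidiag_univ, Nat.multichoose_eq]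
        have h1 : 2 * ℓ + 1 + (n - (2 * k + 1)) - 1 = n - (2 * k + 1) + 2 * ℓ := by omega
        rw [h1, ← Nat.choose_symm (show 2 * ℓ ≤ n - (2 * k + 1) + 2 * ℓ by omega)]
        congr 1
        omega
      · rw [if_neg hn, if_neg hn, Finset.card_empty]
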